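/- Let N ∈ ℕ, α > 0, s ∈ ℝ, h ∈ (0, 1], and let M, K be real symmetric N×N matrices with M positive definite and K positive semidefinite. Suppose there are constants c₁, c₂, d₂ > 0 such that c₁ h^s ‖x‖² ≤ xᵀ M x ≤ c₂ h^s ‖x‖² and xᵀ K x ≤ d₂ h^{s−2} ‖x‖² for all x ∈ ℝ^N. Then G := M + α K M⁻¹ K is symmetric positive definite and satisfies, for all x ∈ ℝ^N, c₁ h^s ‖x‖² ≤ xᵀ G x ≤ (c₂ + α d₂²/c₁) h^{s−4} ‖x‖². -/

import Mathlib

open Matrix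

section Aux

variable {N : ℕ}

private lemma dot_nonneg (x : Fin N → ℝ) : 0 ≤ x ⬝ᵥ x :=
  Finset.sum_nonneg fun i _ => mul_self_nonneg _

private lemma dot_CS (x y : Fin N → ℝ) : (x ⬝ᵥ y) ^ 2 ≤ (x ⬝ᵥ x) * (y ⬝ᵥ y) := by
  simpa [dotProduct, sq] using Finset.sum_mul_sq_le_sq_mul_sq Finset.univ x y

private lemma dot_symm_mulVec {A : Matrix (Fin N) (Fin N) ℝ} (hA : A.IsSymm)
    (x y : Fin N → ℝ) : x ⬝ᵥ (A *ᵥ y) = (A *ᵥ x) ⬝ᵥ y := by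
  rw [dotProduct_mulVec, ← mulVec_transpose, hA]

/-- If `M` is posdef with quadratic form bounded below by `a ‖x‖²`, then the inverse quadratic
form is bounded above by `a⁻¹ ‖y‖²`, in the form `a * (y ⬝ᵥ M⁻¹ y) ≤ ‖y‖²`. -/
private lemma inv_quad_upper {M : Matrix (Fin N) (Fin N) ℝ} (hMpd : M.PosDef)
    {a : ℝ} (ha : 0 < a)
    (hlow : ∀ x : Fin N → ℝ, a * (x ⬝ᵥ x) ≤ x ⬝ᵥ (M *ᵥ x)) (y : Fin N → ℝ) :
    a * (y ⬝ᵥ (M⁻¹ *ᵥ y)) ≤ y ⬝ᵥ y := by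
  set z : Fin N → ℝ := M⁻¹ *ᵥ y with hz
  have hMz : M *ᵥ z = y := by
    rw [hz, mulVec_mulVec, mul_nonsing_inv M (isUnit_iff_ne_zero.mpr hMpd.det_pos.ne'),
      one_mulVec]
  have hyz : y ⬝ᵥ z = z ⬝ᵥ (M *ᵥ z) := by rw [← hMz, dotProduct_comm]
  have h1 : a * (z ⬝ᵥ z) ≤ y ⬝ᵥ z := by rw [hyz]; exact hlow z
  have h2 : (y ⬝ᵥ z) ^ 2 ≤ (y ⬝ᵥ y) * (z ⬝ᵥ z) := dot_CS y z
  have hzz : 0 ≤ z ⬝ᵥ z := dot_nonneg z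
  have hyy : 0 ≤ y ⬝ᵥ y := dot_nonneg y
  have ht : 0 ≤ y ⬝ᵥ z := le_trans (mul_nonneg ha.le hzz) h1
  nlinarith [mul_le_mul_of_nonneg_left h2 ha.le, mul_le_mul_of_nonneg_left h1 hyy]

/-- For a symmetric psd matrix `K` with quadratic form bounded by `b ‖x‖²`, one has
`‖K x‖² ≤ b² ‖x‖²`. -/
private lemma sq_norm_mulVec_le {K : Matrix (Fin N) (Fin N) ℝ} (hKpsd : K.PosSemidef)
    {b : ℝ} (hb : 0 ≤ b)
    (hup : ∀ x : Fin N → ℝ, x ⬝ᵥ (K *ᵥ x) ≤ b * (x ⬝ᵥ x)) (x : Fin N → ℝ) :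
    (K *ᵥ x) ⬝ᵥ (K *ᵥ x) ≤ b ^ 2 * (x ⬝ᵥ x) := by
  set S := (open scoped MatrixOrder in CFC.sqrt K) with hS
  have hSsymm : S.IsSymm := by
    have := (open scoped MatrixOrder in (CFC.sqrt_nonneg K).posSemidef).1
    rwa [IsHermitian, conjTranspose_eq_transpose_of_trivial] at this
  have hSS : S * S = K := open scoped MatrixOrder in CFC.sqrt_mul_sqrt_self K hKpsd.nonneg
  set y : Fin N → ℝ := S *ᵥ x with hy
  have hKx : K *ᵥ x = S *ᵥ y := by rw [hy, mulVec_mulVec, hSS]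
  have hyy : y ⬝ᵥ y = x ⬝ᵥ (K *ᵥ x) := by
    calc y ⬝ᵥ y = (S *ᵥ x) ⬝ᵥ (S *ᵥ x) := by rw [hy]
      _ = x ⬝ᵥ (S *ᵥ (S *ᵥ x)) := (dot_symm_mulVec hSsymm x (S *ᵥ x)).symm
      _ = x ⬝ᵥ (K *ᵥ x) := by rw [mulVec_mulVec, hSS]
  have h1 : (K *ᵥ x) ⬝ᵥ (K *ᵥ x) = y ⬝ᵥ (K *ᵥ y) := by
    calc (K *ᵥ x) ⬝ᵥ (K *ᵥ x) = (S *ᵥ y) ⬝ᵥ (S *ᵥ y) := by rw [hKx]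
      _ = y ⬝ᵥ (S *ᵥ (S *ᵥ y)) := (dot_symm_mulVec hSsymm y (S *ᵥ y)).symm
      _ = y ⬝ᵥ (K *ᵥ y) := by rw [mulVec_mulVec, hSS]
  have h2 : y ⬝ᵥ (K *ᵥ y) ≤ b * (y ⬝ᵥ y) := hup y
  have h3 : x ⬝ᵥ (K *ᵥ x) ≤ b * (x ⬝ᵥ x) := hup x
  calc (K *ᵥ x) ⬝ᵥ (K *ᵥ x) = y ⬝ᵥ (K *ᵥ y) := h1
    _ ≤ b * (y ⬝ᵥ y) := h2
    _ = b * (x ⬝ᵥ (K *ᵥ x)) := by rw [hyy]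
    _ ≤ b * (b * (x ⬝ᵥ x)) := mul_le_mul_of_nonneg_left h3 hb
    _ = b ^ 2 * (x ⬝ᵥ x) := by ring

end Aux

/-- Lemma 4.2: Rayleigh-quotient bounds for `G = M + α K M⁻¹ K` built from the finite
element mass matrix `M` and stiffness matrix `K`. -/
theorem rayleigh_bounds_G
    (N : ℕ) (α s h : ℝ) (hα : 0 < α) (hh : 0 < h) (hh1 : h ≤ 1)
    (M K : Matrix (Fin N) (Fin N) ℝ)
    (hMsymm : M.IsSymm) (hKsymm : K.IsSymm)
    (hMpd : M.PosDef) (hKpsd : K.PosSemidef)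
    (c₁ c₂ d₂ : ℝ) (hc₁ : 0 < c₁) (hc₂ : 0 < c₂) (hd₂ : 0 < d₂)
    (hMlow : ∀ x : Fin N → ℝ, c₁ * h ^ s * (x ⬝ᵥ x) ≤ x ⬝ᵥ (M *ᵥ x))
    (hMup : ∀ x : Fin N → ℝ, x ⬝ᵥ (M *ᵥ x) ≤ c₂ * h ^ s * (x ⬝ᵥ x))
    (hKup : ∀ x : Fin N → ℝ, x ⬝ᵥ (K *ᵥ x) ≤ d₂ * h ^ (s - 2) * (x ⬝ᵥ x)) :
    (M + α • (K * M⁻¹ * K)).IsSymm ∧ (M + α • (K * M⁻¹ * K)).PosDef ∧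
      ∀ x : Fin N → ℝ,
        c₁ * h ^ s * (x ⬝ᵥ x) ≤ x ⬝ᵥ ((M + α • (K * M⁻¹ * K)) *ᵥ x) ∧
        x ⬝ᵥ ((M + α • (K * M⁻¹ * K)) *ᵥ x) ≤ (c₂ + α * d₂ ^ 2 / c₁) * h ^ (s - 4) * (x ⬝ᵥ x) := by
  have hhs : (0:ℝ) < h ^ s := Real.rpow_pos_of_pos hh s
  have hhs2 : (0:ℝ) < h ^ (s - 2) := Real.rpow_pos_of_pos hh _
  have hMinvsymm : M⁻¹.IsSymm := by
    rw [Matrix.IsSymm, transpose_nonsing_inv, hMsymm]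
  have hMinvpd : M⁻¹.PosDef := hMpd.inv
  -- symmetry of K * M⁻¹ * K
  have hKMKsymm : (K * M⁻¹ * K).IsSymm := by
    rw [Matrix.IsSymm, transpose_mul, transpose_mul, hKsymm, hMinvsymm, mul_assoc]
  have hGsymm : (M + α • (K * M⁻¹ * K)).IsSymm := by
    rw [Matrix.IsSymm, transpose_add, transpose_smul, hMsymm, hKMKsymm]
  -- quadratic form identity
  have hquad : ∀ x : Fin N → ℝ,
      x ⬝ᵥ ((M + α • (K * M⁻¹ * K)) *ᵥ x)
        = x ⬝ᵥ (M *ᵥ x) + α * ((K *ᵥ x) ⬝ᵥ (M⁻¹ *ᵥ (K *ᵥ x))) := by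
    intro x
    rw [add_mulVec, dotProduct_add, smul_mulVec, dotProduct_smul]
    congr 1
    rw [smul_eq_mul]
    congr 1
    rw [mul_assoc, ← mulVec_mulVec, dot_symm_mulVec hKsymm, mulVec_mulVec]
  -- nonnegativity of the second term
  have hsecond_nonneg : ∀ x : Fin N → ℝ, 0 ≤ (K *ᵥ x) ⬝ᵥ (M⁻¹ *ᵥ (K *ᵥ x)) := by
    intro x
    have := hMinvpd.posSemidef.dotProduct_mulVec_nonneg (K *ᵥ x)
    simpa using this
  -- lower bound
  have hlow : ∀ x : Fin N → ℝ,
      c₁ * h ^ s * (x ⬝ᵥ x) ≤ x ⬝ᵥ ((M + α • (K * M⁻¹ * K)) *ᵥ x) := by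
    intro x
    rw [hquad x]
    have := mul_nonneg hα.le (hsecond_nonneg x)
    linarith [hMlow x]
  -- upper bound on the inverse quadratic form
  have hMinvUp : ∀ y : Fin N → ℝ,
      c₁ * h ^ s * (y ⬝ᵥ (M⁻¹ *ᵥ y)) ≤ y ⬝ᵥ y :=
    inv_quad_upper hMpd (mul_pos hc₁ hhs) hMlow
  -- bound on ‖K x‖²
  have hKsq : ∀ x : Fin N → ℝ,
      (K *ᵥ x) ⬝ᵥ (K *ᵥ x) ≤ (d₂ * h ^ (s - 2)) ^ 2 * (x ⬝ᵥ x) :=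
    sq_norm_mulVec_le hKpsd (mul_pos hd₂ hhs2).le hKup
  -- upper bound
  have hup : ∀ x : Fin N → ℝ,
      x ⬝ᵥ ((M + α • (K * M⁻¹ * K)) *ᵥ x)
        ≤ (c₂ + α * d₂ ^ 2 / c₁) * h ^ (s - 4) * (x ⬝ᵥ x) := by
    intro x
    rw [hquad x]
    have hxx : 0 ≤ x ⬝ᵥ x := dot_nonneg x
    -- second term bound
    have h1 : (K *ᵥ x) ⬝ᵥ (M⁻¹ *ᵥ (K *ᵥ x))
        ≤ (c₁ * h ^ s)⁻¹ * ((d₂ * h ^ (s - 2)) ^ 2 * (x ⬝ᵥ x)) := by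
      have ha : (0:ℝ) < c₁ * h ^ s := mul_pos hc₁ hhs
      have := hMinvUp (K *ᵥ x)
      have := hKsq x
      rw [le_inv_mul_iff₀ ha]
      linarith
    have hexp : h ^ (s - 2) * h ^ (s - 2) / h ^ s = h ^ (s - 4) := by
      rw [← Real.rpow_add hh, ← Real.rpow_sub hh]
      congr 1
      ring
    have hmono : h ^ s ≤ h ^ (s - 4) :=
      Real.rpow_le_rpow_of_exponent_ge hh hh1 (by linarith)
    have hterm2 : α * ((K *ᵥ x) ⬝ᵥ (M⁻¹ *ᵥ (K *ᵥ x)))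
        ≤ α * d₂ ^ 2 / c₁ * h ^ (s - 4) * (x ⬝ᵥ x) := by
      have h2 := mul_le_mul_of_nonneg_left h1 hα.le
      have heq : α * ((c₁ * h ^ s)⁻¹ * ((d₂ * h ^ (s - 2)) ^ 2 * (x ⬝ᵥ x)))
          = α * d₂ ^ 2 / c₁ * (h ^ (s - 2) * h ^ (s - 2) / h ^ s) * (x ⬝ᵥ x) := by
        field_simp
      rw [heq, hexp] at h2
      exact h2
    have hterm1 : x ⬝ᵥ (M *ᵥ x) ≤ c₂ * h ^ (s - 4) * (x ⬝ᵥ x) := by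
      refine le_trans (hMup x) ?_
      have := mul_le_mul_of_nonneg_right (mul_le_mul_of_nonneg_left hmono hc₂.le) hxx
      linarith
    calc x ⬝ᵥ (M *ᵥ x) + α * ((K *ᵥ x) ⬝ᵥ (M⁻¹ *ᵥ (K *ᵥ x)))
        ≤ c₂ * h ^ (s - 4) * (x ⬝ᵥ x) + α * d₂ ^ 2 / c₁ * h ^ (s - 4) * (x ⬝ᵥ x) :=
          add_le_add hterm1 hterm2
      _ = (c₂ + α * d₂ ^ 2 / c₁) * h ^ (s - 4) * (x ⬝ᵥ x) := by ring
  refine ⟨hGsymm, posDef_iff_dotProduct_mulVec.mpr ⟨?_, ?_⟩, fun x => ⟨hlow x, hup x⟩⟩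
  · rw [IsHermitian, conjTranspose_eq_transpose_of_trivial]
    exact hGsymm
  · intro x hx
    have hxpos : 0 < x ⬝ᵥ x := by
      rcases lt_or_eq_of_le (dot_nonneg x) with hp | hp
      · exact hp
      · exfalso
        have h2 := hMup x
        rw [← hp, mul_zero] at h2
        have h3 := hMpd.dotProduct_mulVec_pos hx
        simp only [star_trivial] at h3
        linarith
    have := hlow x
    have hpos : 0 < c₁ * h ^ s * (x ⬝ᵥ x) := mul_pos (mul_pos hc₁ hhs) hxpos
    simpa using lt_of_lt_of_le hpos this
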